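/- Let X be a set with ternary operation [ ] satisfying (LN) and (RN). Define on Cₙ = R⟨X^{n+2}⟩ the face maps dₙⁿ'ᴿ(x₀,…,xₙ₊₁) = (x₀,…,xₙ) and dᵢ₋₁ⁿ'ᴿ(x₀,…,xₙ₊₁) = dᵢⁿ'ᴿ(x₀,…,xᵢ₋₁,[xᵢ₋₁xᵢxᵢ₊₁],xᵢ₊₁,…,xₙ₊₁) for 1 ≤ i ≤ n. Then with dᵢⁿ := dᵢⁿ'ᴸ − dᵢⁿ'ᴿ (with dᵢⁿ'ᴸ as in the standard left face maps), the family (Cₙ, dᵢⁿ) is a presimplicial module: dᵢⁿ⁻¹ dⱼⁿ = dⱼ₋₁ⁿ⁻¹ dᵢⁿ for 0 ≤ i < j ≤ n. -/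

import Mathlib

universe u
variable {X : Type u}

open Fin.NatCast in
/-- Substitution: replace the `i`-th entry `xᵢ` of the tuple by `[xᵢ₋₁ xᵢ xᵢ₊₁]`. -/
def subst (t : X → X → X → X) (n i : ℕ) (x : Fin (n + 2) → X) : Fin (n + 2) → X :=
  Function.update x (i : Fin (n + 2))
    (t (x ((i : Fin (n + 2)) - 1)) (x (i : Fin (n + 2))) (x ((i : Fin (n + 2)) + 1)))

/-- Left face maps `dᵢⁿ'ᴸ` on tuples. -/
def dL (t : X → X → X → X) (n : ℕ) : ℕ → (Fin (n + 2) → X) → (Fin (n + 1) → X)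
  | 0, x => fun j => x j.succ
  | i + 1, x => dL t n i (subst t n (i + 1) x)

/-- Auxiliary for right face maps: `dRa t n m = d_{n-m}ⁿ'ᴿ`. -/
def dRa (t : X → X → X → X) (n : ℕ) : ℕ → (Fin (n + 2) → X) → (Fin (n + 1) → X)
  | 0, x => fun j => x j.castSucc
  | m + 1, x => dRa t n m (subst t n (n - m) x)

/-- Right face maps `dᵢⁿ'ᴿ` on tuples. -/
def dR (t : X → X → X → X) (n i : ℕ) : (Fin (n + 2) → X) → (Fin (n + 1) → X) :=
  dRa t n (n - i)

def lN (t : X → X → X → X) (x : ℕ → X) : ℕ → ℕ → X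
  | 0, k => x (k + 1)
  | m + 1, k => t (x k) (x (k + 1)) (lN t x m (k + 1))

def rN (t : X → X → X → X) (x : ℕ → X) (i : ℕ) : ℕ → X
  | 0 => x i
  | m + 1 => t (rN t x i m) (x (i + m + 1)) (x (i + m + 2))

def dLN (t : X → X → X → X) (i : ℕ) (x : ℕ → X) : ℕ → X := fun k => lN t x (i - k) k
def dRN (t : X → X → X → X) (i : ℕ) (x : ℕ → X) : ℕ → X :=
  fun k => if k ≤ i then x k else rN t x i (k - i)

variable (t : X → X → X → X)

lemma lN_congr {x y : ℕ → X} : ∀ m k, (∀ r, k ≤ r → r ≤ k + m + 1 → x r = y r) →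
    lN t x m k = lN t y m k
  | 0, k, h => h (k+1) (by omega) (by omega)
  | m+1, k, h => by
    simp only [lN]
    rw [h k le_rfl (by omega), h (k+1) (by omega) (by omega),
      lN_congr m (k+1) (fun r h1 h2 => h r (by omega) (by omega))]

lemma rN_congr {x y : ℕ → X} (i : ℕ) : ∀ m, (∀ r, i ≤ r → r ≤ i + m + 1 → x r = y r) →
    rN t x i m = rN t y i m
  | 0, h => h i le_rfl (by omega)
  | m+1, h => by
    simp only [rN]
    rw [rN_congr i m (fun r h1 h2 => h r h1 (by omega)),
      h (i+m+1) (by omega) (by omega), h (i+m+2) (by omega) (by omega)]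

lemma lN_shift {x z : ℕ → X} : ∀ m k, (∀ r, k ≤ r → z r = x (r+1)) →
    lN t z m k = lN t x m (k+1)
  | 0, k, h => by simp only [lN]; rw [h (k+1) (by omega)]
  | m+1, k, h => by
    simp only [lN]
    rw [h k le_rfl, h (k+1) (by omega), lN_shift m (k+1) (fun r hr => h r (by omega))]

lemma rN_shift {x z : ℕ → X} (i : ℕ) (h : ∀ r, i ≤ r → z r = x (r+1)) :
    ∀ m, rN t z i m = rN t x (i+1) m
  | 0 => by simp only [rN]; rw [h i le_rfl]
  | m+1 => by
    simp only [rN]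
    rw [rN_shift i h m, h (i+m+1) (by omega), h (i+m+2) (by omega),
      show i+m+1+1 = i+1+m+1 from by omega, show i+1+m+1+1 = i+1+m+2 from by omega]

lemma dLN_lt {i k : ℕ} (h : k < i) (x : ℕ → X) :
    dLN t i x k = t (x k) (x (k+1)) (dLN t i x (k+1)) := by
  unfold dLN
  rw [show i - k = (i - (k+1)) + 1 from by omega]
  rfl

lemma dLN_ge {i k : ℕ} (h : i ≤ k) (x : ℕ → X) : dLN t i x k = x (k+1) := by
  unfold dLN
  rw [Nat.sub_eq_zero_of_le h]
  rfl

lemma dRN_le {i k : ℕ} (h : k ≤ i) (x : ℕ → X) : dRN t i x k = x k := if_pos h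

lemma dRN_eq_rN {i k : ℕ} (h : i ≤ k) (x : ℕ → X) : dRN t i x k = rN t x i (k - i) := by
  unfold dRN
  split
  · rw [show k = i from by omega, Nat.sub_self]; rfl
  · rfl

lemma rN_step {i k : ℕ} (h : i ≤ k) (x : ℕ → X) :
    rN t x i (k + 1 - i) = t (rN t x i (k - i)) (x (k+1)) (x (k+2)) := by
  rw [show k + 1 - i = (k - i) + 1 from by omega]
  simp only [rN]
  rw [show i + (k-i) + 1 = k+1 from by omega, show i + (k-i) + 2 = k+2 from by omega]

lemma dRN_rec {i k : ℕ} (h : i ≤ k) (x : ℕ → X) :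
    dRN t i x (k+1) = t (dRN t i x k) (x (k+1)) (x (k+2)) := by
  rw [dRN_eq_rN t (by omega) x, dRN_eq_rN t h x, rN_step t h x]

lemma LL_main
    (hLN : ∀ a b c d, t a b (t b c d) = t a (t a b c) (t (t a b c) c d))
    (hRN : ∀ a b c d, t (t a b c) c d = t (t a b (t b c d)) (t b c d) d)
    (x : ℕ → X) {i j : ℕ} (hij : i < j) :
    ∀ r k, k + r + 1 = i →
      lN t (dLN t j x) (i - k) k = lN t (dLN t i x) (j - 1 - k) k ∧
      dLN t j x k = t (x k) (dLN t i x k) (lN t (dLN t j x) (i - k) k) := by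
  intro r
  induction r with
  | zero =>
    intro k hk
    -- k + 1 = i
    have yk : dLN t j x k = t (x k) (x (k+1)) (dLN t j x (k+1)) := dLN_lt t (by omega) x
    have yk1 : dLN t j x (k+1) = t (x (k+1)) (x (k+2)) (dLN t j x (k+2)) := dLN_lt t (by omega) x
    have zk : dLN t i x k = t (x k) (x (k+1)) (dLN t i x (k+1)) := dLN_lt t (by omega) x
    have zk1 : dLN t i x (k+1) = x (k+2) := dLN_ge t (by omega) x
    have yk2 : dLN t j x (k+2) = lN t x (j - 1 - (k+1)) (k+2) := by
      unfold dLN; rw [show j - (k+2) = j - 1 - (k+1) from by omega]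
    have lhs1 : lN t (dLN t j x) (i - k) k
        = t (t (x k) (x (k+1)) (x (k+2))) (x (k+2)) (dLN t j x (k+2)) := by
      rw [show i - k = 1 from by omega]
      simp only [lN]
      rw [show k+1+1 = k+2 from by omega, yk, yk1, ← hRN]
    have rhs1 : lN t (dLN t i x) (j - 1 - k) k
        = t (t (x k) (x (k+1)) (x (k+2))) (x (k+2)) (dLN t j x (k+2)) := by
      rw [show j - 1 - k = (j - 1 - (k+1)) + 1 from by omega]
      simp only [lN]
      rw [zk, zk1, yk2]
      rw [lN_shift t (j - 1 - (k+1)) (k+1) (fun r hr => dLN_ge t (by omega) x)]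
    constructor
    · rw [lhs1, rhs1]
    · rw [lhs1, zk, zk1, yk, yk1]
      exact hLN (x k) (x (k+1)) (x (k+2)) (dLN t j x (k+2))
  | succ r ih =>
    intro k hk
    obtain ⟨ih1, ih2⟩ := ih (k+1) (by omega)
    have yk : dLN t j x k = t (x k) (x (k+1)) (dLN t j x (k+1)) := dLN_lt t (by omega) x
    have zk : dLN t i x k = t (x k) (x (k+1)) (dLN t i x (k+1)) := dLN_lt t (by omega) x
    have lhs1 : lN t (dLN t j x) (i - k) k
        = t (dLN t i x k) (dLN t i x (k+1)) (lN t (dLN t j x) (i - (k+1)) (k+1)) := by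
      rw [show i - k = (i - (k+1)) + 1 from by omega]
      simp only [lN]
      rw [yk, ih2, ← hRN, ← zk]
    constructor
    · rw [lhs1, ih1, show j - 1 - k = (j - 1 - (k+1)) + 1 from by omega]
      simp only [lN]
    · rw [lhs1, yk, ih2, zk]
      exact hLN (x k) (x (k+1)) (dLN t i x (k+1)) (lN t (dLN t j x) (i - (k+1)) (k+1))

lemma LLn
    (hLN : ∀ a b c d, t a b (t b c d) = t a (t a b c) (t (t a b c) c d))
    (hRN : ∀ a b c d, t (t a b c) c d = t (t a b (t b c d)) (t b c d) d)
    (x : ℕ → X) {i j : ℕ} (hij : i < j) (k : ℕ) :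
    dLN t i (dLN t j x) k = dLN t (j-1) (dLN t i x) k := by
  rcases lt_or_ge k i with hk | hk
  · exact (LL_main t hLN hRN x hij (i - k - 1) k (by omega)).1
  · rw [dLN_ge t hk]
    show lN t x (j - (k+1)) (k+1) = lN t (dLN t i x) (j - 1 - k) k
    rw [lN_shift t (j - 1 - k) k (fun r hr => dLN_ge t (le_trans hk hr) x),
      show j - 1 - k = j - (k+1) from by omega]

lemma RR_main
    (hLN : ∀ a b c d, t a b (t b c d) = t a (t a b c) (t (t a b c) c d))
    (hRN : ∀ a b c d, t (t a b c) c d = t (t a b (t b c d)) (t b c d) d)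
    (x : ℕ → X) {i j : ℕ} (hij : i < j) :
    ∀ d, rN t (dRN t j x) i (j + d - i) = rN t (dRN t i x) (j-1) (d+1) ∧
      dRN t i x (j + d + 1)
        = t (rN t (dRN t j x) i (j + d - i)) (dRN t j x (j + d + 1)) (x (j + d + 2)) := by
  have hyj1 : dRN t j x (j+1) = t (x j) (x (j+1)) (x (j+2)) := by
    rw [dRN_rec t le_rfl x, dRN_le t le_rfl x]
  intro d
  induction d with
  | zero =>
    have hA : rN t (dRN t j x) i (j-1-i) = rN t x i (j-1-i) :=
      rN_congr t i (j-1-i) (fun r h1 h2 => dRN_le t (by omega) x)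
    have eL : rN t (dRN t j x) i (j - i) =
        t (rN t (dRN t j x) i (j-1-i)) (dRN t j x j) (dRN t j x (j+1)) := by
      have h := rN_step t (show i ≤ j-1 by omega) (dRN t j x)
      rw [show j-1+1 = j from by omega, show j-1+2 = j+1 from by omega] at h
      exact h
    have hzj1 : dRN t i x (j-1) = rN t x i (j-1-i) := dRN_eq_rN t (by omega) x
    have hzj : dRN t i x j = t (rN t x i (j-1-i)) (x j) (x (j+1)) := by
      rw [dRN_eq_rN t (le_of_lt hij) x]
      have h := rN_step t (show i ≤ j-1 by omega) x
      rw [show j-1+1 = j from by omega, show j-1+2 = j+1 from by omega] at h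
      exact h
    have hzj2 : dRN t i x (j+1) = t (dRN t i x j) (x (j+1)) (x (j+2)) :=
      dRN_rec t (by omega) x
    have eR : rN t (dRN t i x) (j-1) (0+1) =
        t (dRN t i x (j-1)) (dRN t i x j) (dRN t i x (j+1)) := by
      simp only [rN]
      rw [show j-1+0+1 = j from by omega, show j-1+0+2 = j+1 from by omega]
    constructor
    · rw [show j+0 = j from rfl, eL, eR, hA, hzj1, hzj, hzj2, hzj, dRN_le t le_rfl x,
        hyj1, ← hLN]
    · rw [show j+0 = j from rfl, eL, hA, dRN_le t le_rfl x, hyj1, hzj2, hzj, hRN]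
  | succ d ih =>
    obtain ⟨ih1, ih2⟩ := ih
    have eL : rN t (dRN t j x) i (j + (d+1) - i) =
        t (rN t (dRN t j x) i (j + d - i)) (dRN t j x (j+d+1)) (dRN t j x (j+d+2)) := by
      have h := rN_step t (show i ≤ j + d by omega) (dRN t j x)
      rw [show j+d+1-i = j+(d+1)-i from by omega] at h
      exact h
    have eyK2 : dRN t j x (j+d+2) = t (dRN t j x (j+d+1)) (x (j+d+2)) (x (j+d+3)) := by
      have h := dRN_rec t (show j ≤ j+d+1 by omega) x
      rw [show j+d+1+1 = j+d+2 from by omega, show j+d+1+2 = j+d+3 from by omega] at h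
      exact h
    have ezK2 : dRN t i x (j+d+2) = t (dRN t i x (j+d+1)) (x (j+d+2)) (x (j+d+3)) := by
      have h := dRN_rec t (show i ≤ j+d+1 by omega) x
      rw [show j+d+1+1 = j+d+2 from by omega, show j+d+1+2 = j+d+3 from by omega] at h
      exact h
    have eR : rN t (dRN t i x) (j-1) (d+1+1) =
        t (rN t (dRN t i x) (j-1) (d+1)) (dRN t i x (j+d+1)) (dRN t i x (j+d+2)) := by
      simp only [rN]
      rw [show j-1+(d+1)+1 = j+d+1 from by omega, show j-1+(d+1)+2 = j+d+2 from by omega]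
    constructor
    · rw [eL, eR, ← ih1, ih2, ezK2, ih2, ← hLN, eyK2]
    · rw [show j+(d+1)+1 = j+d+2 from by omega, show j+(d+1)+2 = j+d+3 from by omega,
        ezK2, ih2, hRN, ← eyK2, eL]

lemma RRn
    (hLN : ∀ a b c d, t a b (t b c d) = t a (t a b c) (t (t a b c) c d))
    (hRN : ∀ a b c d, t (t a b c) c d = t (t a b (t b c d)) (t b c d) d)
    (x : ℕ → X) {i j : ℕ} (hij : i < j) (k : ℕ) :
    dRN t i (dRN t j x) k = dRN t (j-1) (dRN t i x) k := by
  rcases le_or_gt k i with hk | hk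
  · rw [dRN_le t hk, dRN_le t (by omega) x, dRN_le t (show k ≤ j-1 by omega),
      dRN_le t hk x]
  rcases le_or_gt k (j-1) with hk2 | hk2
  · rw [dRN_eq_rN t (le_of_lt hk), dRN_le t hk2,
      dRN_eq_rN t (le_of_lt hk) x,
      rN_congr t i (k-i) (fun r h1 h2 => dRN_le t (by omega) x)]
  · have h := (RR_main t hLN hRN x hij (k - j)).1
    rw [show j + (k-j) - i = k - i from by omega, show k-j+1 = k-(j-1) from by omega] at h
    rw [dRN_eq_rN t (le_of_lt hk), dRN_eq_rN t (show j-1 ≤ k by omega), h]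

lemma RL_PY
    (hRN : ∀ a b c d, t (t a b c) c d = t (t a b (t b c d)) (t b c d) d)
    (x : ℕ → X) {i j : ℕ} (hij : i < j) :
    ∀ e, i + e ≤ j - 1 → rN t (dLN t j x) i e
      = t (dRN t i x (i+e)) (x (i+e+1)) (dLN t j x (i+e+1)) := by
  intro e
  induction e with
  | zero =>
    intro _
    simp only [rN]
    rw [show i+0 = i from rfl, dRN_le t le_rfl x, dLN_lt t hij x]
  | succ e ih =>
    intro he
    rw [show i+(e+1) = i+e+1 from by omega, show i+e+1+1 = i+e+2 from by omega]
    simp only [rN]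
    rw [ih (by omega), dLN_lt t (show i+e+1 < j by omega) x,
      show i+e+1+1 = i+e+2 from by omega, ← hRN,
      ← dRN_rec t (show i ≤ i+e by omega) x]

lemma RL_TOP
    (hRN : ∀ a b c d, t (t a b c) c d = t (t a b (t b c d)) (t b c d) d)
    (x : ℕ → X) {i j : ℕ} (hij : i < j) :
    ∀ e, rN t (dLN t j x) i (j-1-i+e) = dRN t i x (j+e) := by
  intro e
  induction e with
  | zero =>
    have h := RL_PY t hRN x hij (j-1-i) (by omega)
    rw [show i+(j-1-i) = j-1 from by omega, show j-1+1 = j from by omega] at h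
    have h2 := dRN_rec t (show i ≤ j-1 by omega) x
    rw [show j-1+1 = j from by omega, show j-1+2 = j+1 from by omega] at h2
    rw [show j-1-i+0 = j-1-i from rfl, h, dLN_ge t le_rfl x, show j+0 = j from rfl, h2]
  | succ e ih =>
    rw [show j-1-i+(e+1) = (j-1-i+e)+1 from by omega]
    simp only [rN]
    rw [ih, show i+(j-1-i+e)+1 = j+e from by omega, show i+(j-1-i+e)+2 = j+e+1 from by omega,
      dLN_ge t (show j ≤ j+e by omega) x, dLN_ge t (show j ≤ j+e+1 by omega) x,
      ← dRN_rec t (show i ≤ j+e by omega) x, show j+(e+1) = j+e+1 from by omega]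

lemma RL_T
    (hLN : ∀ a b c d, t a b (t b c d) = t a (t a b c) (t (t a b c) c d))
    (hRN : ∀ a b c d, t (t a b c) c d = t (t a b (t b c d)) (t b c d) d)
    (x : ℕ → X) {i j : ℕ} (hij : i < j) :
    ∀ e, e ≤ j-1-i → rN t (dLN t j x) i (j-1-i-e) = lN t (dRN t i x) e (j-1-e) := by
  intro e
  induction e with
  | zero =>
    intro _
    have h := RL_TOP t hRN x hij 0
    rw [show j-1-i+0 = j-1-i from rfl, show j+0 = j from rfl] at h
    simp only [lN]
    rw [show j-1-i-0 = j-1-i from rfl, show j-1-0 = j-1 from rfl,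
      show j-1+1 = j from by omega, h]
  | succ e ih =>
    intro he
    have ihh := ih (by omega)
    simp only [lN]
    have hPY1 := RL_PY t hRN x hij (j-1-i-e) (by omega)
    rw [show i+(j-1-i-e) = j-1-e from by omega, show j-1-e+1 = j-e from by omega] at hPY1
    have hPY2 := RL_PY t hRN x hij (j-1-i-(e+1)) (by omega)
    rw [show i+(j-1-i-(e+1)) = j-1-(e+1) from by omega,
      show j-1-(e+1)+1 = j-1-e from by omega] at hPY2
    have hz := dRN_rec t (show i ≤ j-1-(e+1) by omega) x
    rw [show j-1-(e+1)+1 = j-1-e from by omega, show j-1-(e+1)+2 = j-e from by omega] at hz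
    have hy := dLN_lt t (show j-1-e < j by omega) x
    rw [show j-1-e+1 = j-e from by omega] at hy
    rw [show j-1-(e+1)+1 = j-1-e from by omega, ← ihh, hPY1, hPY2, hz, ← hLN, ← hy]

lemma RL_low
    (hLN : ∀ a b c d, t a b (t b c d) = t a (t a b c) (t (t a b c) c d))
    (hRN : ∀ a b c d, t (t a b c) c d = t (t a b (t b c d)) (t b c d) d)
    (x : ℕ → X) {i j : ℕ} (hij : i < j) :
    ∀ e, e ≤ i → lN t (dRN t i x) (j-1-(i-e)) (i-e) = dLN t j x (i-e) := by
  intro e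
  induction e with
  | zero =>
    intro _
    have h := RL_T t hLN hRN x hij (j-1-i) le_rfl
    rw [show j-1-i-(j-1-i) = 0 from by omega, show j-1-(j-1-i) = i from by omega] at h
    simp only [rN] at h
    rw [show i-0 = i from rfl]
    exact h.symm
  | succ e ih =>
    intro he
    have ihh := ih (by omega)
    rw [show j-1-(i-(e+1)) = (j-1-(i-e))+1 from by omega]
    simp only [lN]
    rw [show i-(e+1)+1 = i-e from by omega, ihh,
      dRN_le t (show i-(e+1) ≤ i by omega) x, dRN_le t (show i-e ≤ i by omega) x]
    have hy := dLN_lt t (show i-(e+1) < j by omega) x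
    rw [show i-(e+1)+1 = i-e from by omega] at hy
    exact hy.symm

lemma RLn
    (hLN : ∀ a b c d, t a b (t b c d) = t a (t a b c) (t (t a b c) c d))
    (hRN : ∀ a b c d, t (t a b c) c d = t (t a b (t b c d)) (t b c d) d)
    (x : ℕ → X) {i j : ℕ} (hij : i < j) (k : ℕ) :
    dRN t i (dLN t j x) k = dLN t (j-1) (dRN t i x) k := by
  rcases le_or_gt k i with hk | hk
  · rw [dRN_le t hk]
    have h := RL_low t hLN hRN x hij (i-k) (by omega)
    rw [show i-(i-k) = k from by omega] at h
    exact h.symm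
  rcases le_or_gt k (j-1) with hk2 | hk2
  · rw [dRN_eq_rN t (le_of_lt hk)]
    have h := RL_T t hLN hRN x hij (j-1-k) (by omega)
    rw [show j-1-i-(j-1-k) = k-i from by omega, show j-1-(j-1-k) = k from by omega] at h
    exact h
  · rw [dRN_eq_rN t (le_of_lt hk), dLN_ge t (show j-1 ≤ k by omega)]
    have h := RL_TOP t hRN x hij (k+1-j)
    rw [show j-1-i+(k+1-j) = k-i from by omega, show j+(k+1-j) = k+1 from by omega] at h
    exact h

lemma LRn (x : ℕ → X) {i j : ℕ} (hij : i < j) (k : ℕ) :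
    dLN t i (dRN t j x) k = dRN t (j-1) (dLN t i x) k := by
  rcases lt_or_ge k i with hk | hk
  · rw [dRN_le t (show k ≤ j-1 by omega)]
    show lN t (dRN t j x) (i-k) k = lN t x (i-k) k
    exact lN_congr t (i-k) k (fun r h1 h2 => dRN_le t (by omega) x)
  rcases le_or_gt k (j-1) with hk2 | hk2
  · rw [dLN_ge t hk, dRN_le t (show k+1 ≤ j by omega) x, dRN_le t hk2,
      dLN_ge t hk x]
  · rw [dLN_ge t hk, dRN_eq_rN t (show j ≤ k+1 by omega) x,
      dRN_eq_rN t (show j-1 ≤ k by omega),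
      rN_shift t (j-1) (fun r hr => dLN_ge t (by omega) x) (k-(j-1)),
      show j-1+1 = j from by omega, show k-(j-1) = k+1-j from by omega]

def updE (t : X → X → X → X) (x : ℕ → X) (p : ℕ) : ℕ → X :=
  fun m => if m = p then t (x (p-1)) (x p) (x (p+1)) else x m

open Fin.NatCast in
def toSeq {n : ℕ} (x : Fin (n+2) → X) : ℕ → X := fun m => x m

lemma dLN_congr {y y' : ℕ → X} (i k : ℕ) (h : ∀ m, m ≤ max (i+1) (k+1) → y m = y' m) :
    dLN t i y k = dLN t i y' k :=
  lN_congr t (i-k) k (fun r h1 h2 => h r (by omega))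

lemma dRN_congr {y y' : ℕ → X} (i k : ℕ) (h : ∀ m, m ≤ max (i+1) (k+1) → y m = y' m) :
    dRN t i y k = dRN t i y' k := by
  unfold dRN
  split
  · exact h k (by omega)
  · exact rN_congr t i (k-i) (fun r h1 h2 => h r (by omega))

lemma lN_updE (x : ℕ → X) (i : ℕ) : ∀ m k, k + m = i →
    lN t (updE t x (i+1)) m k = lN t x (m+1) k
  | 0, k, h => by
    subst h
    simp only [lN, updE, Nat.add_zero, if_true]
    rw [show k+1-1 = k from by omega, show k+1+1 = k+2 from by omega]
  | m+1, k, h => by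
    simp only [lN]
    rw [lN_updE x i m (k+1) (by omega)]
    simp only [updE]
    rw [if_neg (by omega), if_neg (by omega)]
    rfl

lemma dLN_updE (x : ℕ → X) (i k : ℕ) : dLN t i (updE t x (i+1)) k = dLN t (i+1) x k := by
  rcases le_or_gt k i with hk | hk
  · unfold dLN
    rw [lN_updE t x i (i-k) k (by omega), show (i-k)+1 = (i+1)-k from by omega]
  · rw [dLN_ge t (by omega), dLN_ge t (by omega) x]
    simp only [updE]
    rw [if_neg (by omega)]

lemma rN_updE (x : ℕ → X) (p : ℕ) : ∀ m, rN t (updE t x (p+1)) (p+1) m = rN t x p (m+1)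
  | 0 => by
    simp only [rN, updE, if_true]
    rw [show p+1-1 = p from by omega, show p+0+1 = p+1 from by omega,
      show p+0+2 = p+1+1 from by omega]
  | m+1 => by
    simp only [rN]
    rw [rN_updE x p m]
    simp only [updE]
    rw [if_neg (by omega), if_neg (by omega),
      show p+1+m+1 = p+(m+1)+1 from by omega, show p+1+m+2 = p+(m+1)+2 from by omega]
    rfl

lemma dRN_updE (x : ℕ → X) (p k : ℕ) : dRN t (p+1) (updE t x (p+1)) k = dRN t p x k := by
  rcases le_or_gt k p with hk | hk
  · rw [dRN_le t (by omega), dRN_le t hk x]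
    simp only [updE]
    rw [if_neg (by omega)]
  rcases le_or_gt k (p+1) with hk2 | hk2
  · have hkk : k = p+1 := by omega
    subst hkk
    rw [dRN_le t le_rfl, dRN_eq_rN t (by omega) x, show p+1-p = 1 from by omega]
    simp only [updE, rN, if_true]
    rw [show p+1-1 = p from by omega, show p+0+1 = p+1 from by omega,
      show p+0+2 = p+1+1 from by omega]
  · rw [dRN_eq_rN t (by omega), dRN_eq_rN t (by omega) x, rN_updE t x p (k-(p+1)),
      show k-(p+1)+1 = k-p from by omega]

open Fin.NatCast in
lemma agreeSub {n : ℕ} (x : Fin (n+2) → X) (p : ℕ) (hp : p ≤ n) :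
    ∀ m, m ≤ n+1 → toSeq (subst t n (p+1) x) m = updE t (toSeq x) (p+1) m := by
  intro m hm
  have hcast : ∀ a : ℕ, a ≤ n+1 → ((a : Fin (n+2)) : ℕ) = a := fun a ha =>
    Fin.val_cast_of_lt (by omega)
  simp only [toSeq, subst, updE, Function.update_apply]
  have hiff : ((m : Fin (n+2)) = ((p+1 : ℕ) : Fin (n+2))) ↔ m = p+1 := by
    rw [Fin.ext_iff, hcast m hm, hcast (p+1) (by omega)]
  split
  · rename_i hmp
    rw [if_pos (hiff.mp hmp)]
    have e1 : ((p+1 : ℕ) : Fin (n+2)) - 1 = ((p+1-1 : ℕ) : Fin (n+2)) := by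
      rw [show p+1-1 = p from rfl,
        show ((p+1 : ℕ) : Fin (n+2)) = ((p : ℕ) : Fin (n+2)) + 1 from by push_cast; ring,
        add_sub_cancel_right]
    have e2 : ((p+1 : ℕ) : Fin (n+2)) + 1 = ((p+1+1 : ℕ) : Fin (n+2)) := by push_cast; ring
    rw [e1, e2]
  · rename_i hmp
    rw [if_neg (fun hh => hmp (hiff.mpr hh))]

lemma bridgeL {n : ℕ} : ∀ i, i ≤ n+1 → ∀ (x : Fin (n+2) → X) (k : Fin (n+1)),
    dL t n i x k = dLN t i (toSeq x) k.val := by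
  intro i
  induction i with
  | zero =>
    intro _ x k
    rw [show dL t n 0 x k = x k.succ from rfl, dLN_ge t (Nat.zero_le _) (toSeq x)]
    simp only [toSeq]
    congr 1
    apply Fin.ext
    rw [Fin.val_cast_of_lt (show k.val+1 < n+2 from by omega)]
    rfl
  | succ i ih =>
    intro hi x k
    show dL t n i (subst t n (i+1) x) k = _
    rw [ih (by omega) (subst t n (i+1) x) k,
      dLN_congr t i k.val (fun m hm => agreeSub t x i (by omega) m (by omega)),
      dLN_updE]

lemma bridgeRa {n : ℕ} : ∀ m, m ≤ n → ∀ (x : Fin (n+2) → X) (k : Fin (n+1)),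
    dRa t n m x k = dRN t (n-m) (toSeq x) k.val := by
  intro m
  induction m with
  | zero =>
    intro _ x k
    show x k.castSucc = _
    rw [dRN_le t (show k.val ≤ n-0 from by omega)]
    simp only [toSeq]
    congr 1
    apply Fin.ext
    rw [Fin.val_cast_of_lt (show k.val < n+2 from by omega)]
    rfl
  | succ m ih =>
    intro hm x k
    show dRa t n m (subst t n (n-m) x) k = _
    rw [ih (by omega) (subst t n (n-m) x) k]
    rw [show n-m = (n-(m+1))+1 from by omega] at *
    rw [dRN_congr t ((n-(m+1))+1) k.val
        (fun m' hm' => agreeSub t x (n-(m+1)) (by omega) m' (by omega)),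
      dRN_updE]

lemma bridgeR {n : ℕ} (i : ℕ) (hi : i ≤ n) (x : Fin (n+2) → X) (k : Fin (n+1)) :
    dR t n i x k = dRN t i (toSeq x) k.val := by
  have h := bridgeRa t (n-i) (by omega) x k
  rw [show n-(n-i) = i from by omega] at h
  exact h

open Fin.NatCast in
lemma tupLL
    (hLN : ∀ a b c d, t a b (t b c d) = t a (t a b c) (t (t a b c) c d))
    (hRN : ∀ a b c d, t (t a b c) c d = t (t a b (t b c d)) (t b c d) d)
    (n i j : ℕ) (hij : i < j) (hj : j ≤ n+1) :
    (dL t n i) ∘ (dL t (n+1) j) = (dL t n (j-1)) ∘ (dL t (n+1) i) := by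
  funext x k
  simp only [Function.comp_apply]
  have hag1 : ∀ m, m ≤ n+1 → toSeq (dL t (n+1) j x) m = dLN t j (toSeq x) m := by
    intro m hm
    have h := bridgeL t j (by omega) x ((m : ℕ) : Fin (n+2))
    rwa [Fin.val_cast_of_lt (by omega)] at h
  have hag2 : ∀ m, m ≤ n+1 → toSeq (dL t (n+1) i x) m = dLN t i (toSeq x) m := by
    intro m hm
    have h := bridgeL t i (by omega) x ((m : ℕ) : Fin (n+2))
    rwa [Fin.val_cast_of_lt (by omega)] at h
  rw [bridgeL t i (by omega) _ k, bridgeL t (j-1) (by omega) _ k,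
    dLN_congr t i k.val (fun m hm => hag1 m (by omega)),
    dLN_congr t (j-1) k.val (fun m hm => hag2 m (by omega)),
    LLn t hLN hRN (toSeq x) hij k.val]

open Fin.NatCast in
lemma tupRR
    (hLN : ∀ a b c d, t a b (t b c d) = t a (t a b c) (t (t a b c) c d))
    (hRN : ∀ a b c d, t (t a b c) c d = t (t a b (t b c d)) (t b c d) d)
    (n i j : ℕ) (hij : i < j) (hj : j ≤ n+1) :
    (dR t n i) ∘ (dR t (n+1) j) = (dR t n (j-1)) ∘ (dR t (n+1) i) := by
  funext x k
  simp only [Function.comp_apply]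
  have hag1 : ∀ m, m ≤ n+1 → toSeq (dR t (n+1) j x) m = dRN t j (toSeq x) m := by
    intro m hm
    have h := bridgeR t j (by omega) x ((m : ℕ) : Fin (n+2))
    rwa [Fin.val_cast_of_lt (by omega)] at h
  have hag2 : ∀ m, m ≤ n+1 → toSeq (dR t (n+1) i x) m = dRN t i (toSeq x) m := by
    intro m hm
    have h := bridgeR t i (by omega) x ((m : ℕ) : Fin (n+2))
    rwa [Fin.val_cast_of_lt (by omega)] at h
  rw [bridgeR t i (by omega) _ k, bridgeR t (j-1) (by omega) _ k,
    dRN_congr t i k.val (fun m hm => hag1 m (by omega)),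
    dRN_congr t (j-1) k.val (fun m hm => hag2 m (by omega)),
    RRn t hLN hRN (toSeq x) hij k.val]

open Fin.NatCast in
lemma tupLR
    (hLN : ∀ a b c d, t a b (t b c d) = t a (t a b c) (t (t a b c) c d))
    (hRN : ∀ a b c d, t (t a b c) c d = t (t a b (t b c d)) (t b c d) d)
    (n i j : ℕ) (hij : i < j) (hj : j ≤ n+1) :
    (dL t n i) ∘ (dR t (n+1) j) = (dR t n (j-1)) ∘ (dL t (n+1) i) := by
  funext x k
  simp only [Function.comp_apply]
  have hag1 : ∀ m, m ≤ n+1 → toSeq (dR t (n+1) j x) m = dRN t j (toSeq x) m := by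
    intro m hm
    have h := bridgeR t j (by omega) x ((m : ℕ) : Fin (n+2))
    rwa [Fin.val_cast_of_lt (by omega)] at h
  have hag2 : ∀ m, m ≤ n+1 → toSeq (dL t (n+1) i x) m = dLN t i (toSeq x) m := by
    intro m hm
    have h := bridgeL t i (by omega) x ((m : ℕ) : Fin (n+2))
    rwa [Fin.val_cast_of_lt (by omega)] at h
  rw [bridgeL t i (by omega) _ k, bridgeR t (j-1) (by omega) _ k,
    dLN_congr t i k.val (fun m hm => hag1 m (by omega)),
    dRN_congr t (j-1) k.val (fun m hm => hag2 m (by omega)),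
    LRn t (toSeq x) hij k.val]

open Fin.NatCast in
lemma tupRL
    (hLN : ∀ a b c d, t a b (t b c d) = t a (t a b c) (t (t a b c) c d))
    (hRN : ∀ a b c d, t (t a b c) c d = t (t a b (t b c d)) (t b c d) d)
    (n i j : ℕ) (hij : i < j) (hj : j ≤ n+1) :
    (dR t n i) ∘ (dL t (n+1) j) = (dL t n (j-1)) ∘ (dR t (n+1) i) := by
  funext x k
  simp only [Function.comp_apply]
  have hag1 : ∀ m, m ≤ n+1 → toSeq (dL t (n+1) j x) m = dLN t j (toSeq x) m := by
    intro m hm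
    have h := bridgeL t j (by omega) x ((m : ℕ) : Fin (n+2))
    rwa [Fin.val_cast_of_lt (by omega)] at h
  have hag2 : ∀ m, m ≤ n+1 → toSeq (dR t (n+1) i x) m = dRN t i (toSeq x) m := by
    intro m hm
    have h := bridgeR t i (by omega) x ((m : ℕ) : Fin (n+2))
    rwa [Fin.val_cast_of_lt (by omega)] at h
  rw [bridgeR t i (by omega) _ k, bridgeL t (j-1) (by omega) _ k,
    dRN_congr t i k.val (fun m hm => hag1 m (by omega)),
    dLN_congr t (j-1) k.val (fun m hm => hag2 m (by omega)),
    RLn t hLN hRN (toSeq x) hij k.val]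

/-- Left face maps on the free module `Cₙ = R⟨X^{n+2}⟩`. -/
noncomputable def dLhat (R : Type*) [CommRing R] (t : X → X → X → X) (n i : ℕ) :
    ((Fin (n + 2) → X) →₀ R) →ₗ[R] ((Fin (n + 1) → X) →₀ R) :=
  Finsupp.lmapDomain R R (dL t n i)

/-- Right face maps on the free module `Cₙ = R⟨X^{n+2}⟩`. -/
noncomputable def dRhat (R : Type*) [CommRing R] (t : X → X → X → X) (n i : ℕ) :
    ((Fin (n + 2) → X) →₀ R) →ₗ[R] ((Fin (n + 1) → X) →₀ R) :=
  Finsupp.lmapDomain R R (dR t n i)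

/-- With `dᵢⁿ := dᵢⁿ'ᴸ − dᵢⁿ'ᴿ`, the family `(Cₙ, dᵢⁿ)` is a
presimplicial module when the ternary operation satisfies LN and RN:
`dᵢⁿ⁻¹ dⱼⁿ = dⱼ₋₁ⁿ⁻¹ dᵢⁿ` for `i < j ≤ n`. -/
theorem stmt6 (R : Type*) [CommRing R] (t : X → X → X → X)
    (hLN : ∀ a b c d, t a b (t b c d) = t a (t a b c) (t (t a b c) c d))
    (hRN : ∀ a b c d, t (t a b c) c d = t (t a b (t b c d)) (t b c d) d) :
    ∀ n i j : ℕ, i < j → j ≤ n + 1 →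
      (dLhat R t n i - dRhat R t n i).comp
          (dLhat R t (n + 1) j - dRhat R t (n + 1) j)
        = (dLhat R t n (j - 1) - dRhat R t n (j - 1)).comp
            (dLhat R t (n + 1) i - dRhat R t (n + 1) i) := by
  intro n i j hij hj
  have hLL : (dLhat R t n i).comp (dLhat R t (n+1) j)
      = (dLhat R t n (j-1)).comp (dLhat R t (n+1) i) := by
    unfold dLhat
    rw [← Finsupp.lmapDomain_comp, ← Finsupp.lmapDomain_comp, tupLL t hLN hRN n i j hij hj]
  have hRR : (dRhat R t n i).comp (dRhat R t (n+1) j)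
      = (dRhat R t n (j-1)).comp (dRhat R t (n+1) i) := by
    unfold dRhat
    rw [← Finsupp.lmapDomain_comp, ← Finsupp.lmapDomain_comp, tupRR t hLN hRN n i j hij hj]
  have hLR : (dLhat R t n i).comp (dRhat R t (n+1) j)
      = (dRhat R t n (j-1)).comp (dLhat R t (n+1) i) := by
    unfold dLhat dRhat
    rw [← Finsupp.lmapDomain_comp, ← Finsupp.lmapDomain_comp, tupLR t hLN hRN n i j hij hj]
  have hRL : (dRhat R t n i).comp (dLhat R t (n+1) j)
      = (dLhat R t n (j-1)).comp (dRhat R t (n+1) i) := by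
    unfold dLhat dRhat
    rw [← Finsupp.lmapDomain_comp, ← Finsupp.lmapDomain_comp, tupRL t hLN hRN n i j hij hj]
  simp only [LinearMap.sub_comp, LinearMap.comp_sub]
  rw [hLL, hRR, hLR, hRL]
  abel
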